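/- Suppose d = F[m_*]w_* with w_* ∈ W_μ, and m is a stationary point of J̃_α[·; d] (so |m - m_*|r ≤ μ). Then the pair (m, w_α[m; d]) solves the inverse problem with support radius λ for any λ ≥ 2μ and any ε ≥ (8πrμα)²/(1 + (8πrμα)²): namely supp w_α[m;d] ⊆ [-λ, λ] and ‖F[m]w_α[m;d] - d‖ ≤ ε‖d‖. -/

import Mathlib

open MeasureTheory Real Set

/-- For noise-free data `d = F[m_*]w_*`, `w_* ∈ W_μ`, and a
stationary point `m` of `J̃_α[·;d]` (so `|m - m_*| r ≤ μ`), the pair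
`(m, w_α[m;d])` solves the inverse problem with support radius `λ` for any
`λ ≥ 2μ` and any `ε ≥ (8πrμα)²/(1 + (8πrμα)²)`: namely
`supp w_α[m;d] ⊆ [-λ, λ]` and `‖F[m]w_α[m;d] - d‖ ≤ ε‖d‖`. -/
theorem stmt_15 (r mmin mmax lammax tmin tmax α mu lam eps mstar m : ℝ)
    (wstar : ℝ → ℝ)
    (hr : 0 < r) (hmmin : 0 < mmin) (hmm : mmin ≤ mmax) (hlammax : 0 < lammax)
    (ht : tmin < tmax) (hα : 0 < α)
    (hmu : 0 < mu) (hmu' : 2 * mu ≤ lammax)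
    (hmstar : mstar ∈ Ioo mmin mmax) (hm : m ∈ Ioo mmin mmax)
    (hwstar : MemLp wstar 2 (volume : Measure ℝ))
    (hsupp : Function.support wstar ⊆ Icc (-mu) mu)
    (hcont : Icc (mmin * r - lammax) (mmax * r + lammax) ⊆ Icc tmin tmax)
    (tau : ℝ)
    (htau : tau = max (max |tmin - mmin * r| |tmin - mmax * r|)
        (max |tmax - mmin * r| |tmax - mmax * r|))
    (a d walpha : ℝ → ℝ)
    (ha : a = fun t => min |t| tau)
    (hd : d = fun t => wstar (t - mstar * r) / (4 * π * r))
    (hw : walpha = fun t => (1 + (4 * π * r) ^ 2 * α ^ 2 * (a t) ^ 2)⁻¹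
        * wstar (t + (m - mstar) * r))
    (hstat : |m - mstar| * r ≤ mu)
    (hlamlo : 2 * mu ≤ lam) (hlamhi : lam ≤ lammax)
    (heps : (8 * π * r * mu * α) ^ 2 / (1 + (8 * π * r * mu * α) ^ 2) ≤ eps) :
    Function.support walpha ⊆ Icc (-lam) lam ∧
    (∫ t in Icc tmin tmax, (walpha (t - m * r) / (4 * π * r) - d t) ^ 2)
      ≤ eps ^ 2 * ∫ t in Icc tmin tmax, (d t) ^ 2 := by
  have hpi : (0:ℝ) < π := Real.pi_pos
  have h4 : (0:ℝ) < 4 * π * r := by positivity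
  have habsmr : |(m - mstar) * r| ≤ mu := by
    rw [abs_mul, abs_of_pos hr]; exact hstat
  set K : ℝ := (8 * π * r * mu * α) ^ 2 with hK
  have hKpos : 0 < K := by positivity
  have heps0 : 0 ≤ eps := le_trans (by positivity) heps
  have htau0 : (0:ℝ) ≤ tau := by
    rw [htau]
    exact le_trans (abs_nonneg _) (le_trans (le_max_left _ _) (le_max_left _ _))
  constructor
  · intro t ht'
    have hne : wstar (t + (m - mstar) * r) ≠ 0 := by
      intro h0
      exact ht' (by simp [hw, h0])
    have hmem := hsupp (Function.mem_support.mpr hne)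
    have habs1 : |t + (m - mstar) * r| ≤ mu := abs_le.mpr ⟨hmem.1, hmem.2⟩
    have habs2 : |t| ≤ lam := by
      have h1 : |t| ≤ |t + (m - mstar) * r| + |(m - mstar) * r| := by
        have : t = (t + (m - mstar) * r) - (m - mstar) * r := by ring
        nth_rewrite 1 [this]
        exact abs_sub _ _
      linarith
    exact ⟨(abs_le.mp habs2).1, (abs_le.mp habs2).2⟩
  · have key : ∀ t : ℝ, (walpha (t - m * r) / (4 * π * r) - d t) ^ 2
        ≤ eps ^ 2 * (d t) ^ 2 := by
      intro t
      have hshift : t - m * r + (m - mstar) * r = t - mstar * r := by ring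
      by_cases hu : wstar (t - mstar * r) = 0
      · simp [hw, hd, hshift, hu]
      · have hmem := hsupp (Function.mem_support.mpr hu)
        have habs1 : |t - mstar * r| ≤ mu := abs_le.mpr ⟨hmem.1, hmem.2⟩
        have habs2 : |t - m * r| ≤ 2 * mu := by
          have h1 : |t - m * r| ≤ |t - mstar * r| + |(m - mstar) * r| := by
            have : t - m * r = (t - mstar * r) - (m - mstar) * r := by ring
            rw [this]; exact abs_sub _ _
          linarith
        set x : ℝ := (4 * π * r) ^ 2 * α ^ 2 * (a (t - m * r)) ^ 2 with hx
        have ha1 : 0 ≤ a (t - m * r) := by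
          rw [ha]; exact le_min (abs_nonneg _) htau0
        have ha2 : a (t - m * r) ≤ 2 * mu := by
          rw [ha]; exact le_trans (min_le_left _ _) habs2
        have hxnn : 0 ≤ x := by positivity
        have hxK : x ≤ K := by
          have hsq : (a (t - m * r)) ^ 2 ≤ (2 * mu) ^ 2 :=
            pow_le_pow_left₀ ha1 ha2 2
          have h2 : x ≤ (4 * π * r) ^ 2 * α ^ 2 * (2 * mu) ^ 2 :=
            mul_le_mul_of_nonneg_left hsq (by positivity)
          have h3 : (4 * π * r) ^ 2 * α ^ 2 * (2 * mu) ^ 2 = K := by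
            rw [hK]; ring
          linarith
        have h1x : (0:ℝ) < 1 + x := by linarith
        have h1K : (0:ℝ) < 1 + K := by linarith
        have hratio : x / (1 + x) ≤ eps := by
          have h5 : x / (1 + x) ≤ K / (1 + K) := by
            rw [div_le_div_iff₀ h1x h1K]; nlinarith
          linarith
        have hrnn : 0 ≤ x / (1 + x) := by positivity
        have hdiff : walpha (t - m * r) / (4 * π * r) - d t
            = -(x / (1 + x)) * d t := by
          simp only [hw, hd, hshift, ← hx]
          field_simp
          ring
        calc (walpha (t - m * r) / (4 * π * r) - d t) ^ 2
            = (x / (1 + x)) ^ 2 * (d t) ^ 2 := by rw [hdiff]; ring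
          _ ≤ eps ^ 2 * (d t) ^ 2 :=
              mul_le_mul_of_nonneg_right (pow_le_pow_left₀ hrnn hratio 2)
                (sq_nonneg _)
    have hg : Integrable (fun t => eps ^ 2 * (d t) ^ 2)
        (volume.restrict (Icc tmin tmax)) := by
      have h1 : Integrable (fun t : ℝ => wstar (t - mstar * r) ^ 2) :=
        hwstar.integrable_sq.comp_sub_right _
      have h2 := ((h1.const_mul (eps ^ 2 / (4 * π * r) ^ 2)).restrict
        (s := Icc tmin tmax))
      refine h2.congr (Filter.Eventually.of_forall fun t => ?_)
      simp only [hd, div_pow]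
      ring
    rw [← integral_const_mul]
    exact integral_mono_of_nonneg
      (Filter.Eventually.of_forall fun t => sq_nonneg _) hg
      (Filter.Eventually.of_forall key)
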